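/- Let A = {0, a_2, ..., a_n} with 0 < a_2 < ... < a_n, n ≥ 2, and gcd(a_2, ..., a_n) = 1. Let Γ_1 be the numerical semigroup generated by a_2, ..., a_n and Γ_2 the numerical semigroup generated by a_n - a_{n-1}, ..., a_n - a_2, a_n. Then for all sufficiently large s, |sA| = s·a_n + 1 - δ_1 - δ_2, where δ_i = |ℕ \ Γ_i| is the number of gaps of Γ_i. -/

import Mathlib

open Finset Pointwise

/-- The s-fold iterated sumset of a finite set of natural numbers; `sumset A 0 = {0}`. -/
def sumset (A : Finset ℕ) : ℕ → Finset ℕ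
  | 0 => {0}
  | s + 1 => A + sumset A s

lemma mem_sumset_add {A : Finset ℕ} {x y k l : ℕ} (hx : x ∈ sumset A k)
    (hy : y ∈ sumset A l) : x + y ∈ sumset A (k + l) := by
  induction k generalizing x with
  | zero =>
    simp [sumset] at hx; subst hx; simpa using hy
  | succ k ih =>
    simp only [sumset, Finset.mem_add] at hx
    obtain ⟨a, ha, b, hb, rfl⟩ := hx
    have h2 := ih hb
    have : a + (b + y) ∈ sumset A (k + l + 1) :=
      Finset.mem_add.2 ⟨a, ha, b + y, h2, rfl⟩
    have he : k + 1 + l = k + l + 1 := by ring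
    rw [he]
    convert this using 1
    ring

lemma zero_mem_sumset {A : Finset ℕ} (h0 : 0 ∈ A) (s : ℕ) : 0 ∈ sumset A s := by
  induction s with
  | zero => simp [sumset]
  | succ s ih => exact Finset.mem_add.2 ⟨0, h0, 0, ih, rfl⟩

lemma sumset_mono {A : Finset ℕ} (h0 : 0 ∈ A) {k s : ℕ} (h : k ≤ s) {x : ℕ}
    (hx : x ∈ sumset A k) : x ∈ sumset A s := by
  obtain ⟨d, rfl⟩ := Nat.exists_eq_add_of_le h
  have := mem_sumset_add hx (zero_mem_sumset h0 d)
  simpa using this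

lemma smul_mem_sumset {A : Finset ℕ} {a : ℕ} (ha : a ∈ A) (s : ℕ) :
    s * a ∈ sumset A s := by
  induction s with
  | zero => simp [sumset]
  | succ s ih => exact Finset.mem_add.2 ⟨a, ha, s * a, ih, by ring⟩

lemma mem_sumset_one {A : Finset ℕ} {a : ℕ} (ha : a ∈ A) : a ∈ sumset A 1 := by
  have := smul_mem_sumset ha 1
  simpa using this

lemma gcd_dvd_cofinite (S : AddSubmonoid ℕ) (B : Finset ℕ) :
    (∀ b ∈ B, b ∈ S) → 0 < B.gcd id →
    ∃ N : ℕ, ∀ n : ℕ, B.gcd id ∣ n → N ≤ n → n ∈ S := by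
  classical
  induction B using Finset.induction_on with
  | empty => intro _ hd; simp at hd
  | @insert b B hbB ih =>
    intro hB hd
    rw [Finset.gcd_insert] at hd ⊢
    simp only [id] at hd ⊢
    have hbS : b ∈ S := hB b (Finset.mem_insert_self _ _)
    by_cases hd' : B.gcd id = 0
    · rw [hd'] at hd ⊢
      simp only [gcd_zero_right] at hd ⊢
      refine ⟨0, fun n hn _ => ?_⟩
      have hn' : b ∣ n := by
        have : normalize b = b := by simp
        rwa [this] at hn
      obtain ⟨c, rfl⟩ := hn'
      rw [mul_comm, ← smul_eq_mul]
      exact AddSubmonoid.nsmul_mem S hbS c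
    · have hd'pos : 0 < B.gcd id := Nat.pos_of_ne_zero hd'
      obtain ⟨N', hN'⟩ := ih (fun x hx => hB x (Finset.mem_insert_of_mem hx)) hd'pos
      set d' : ℕ := B.gcd id with hd'def
      have hgcd_eq : GCDMonoid.gcd b d' = Nat.gcd b d' := rfl
      rw [hgcd_eq] at hd ⊢
      set d : ℕ := Nat.gcd b d' with hddef
      refine ⟨N' + b * d', fun n hn hNn => ?_⟩
      have hgcdZ : (Int.gcd (b : ℤ) (d' : ℤ)) = d := by
        simp [hddef, Int.gcd_natCast_natCast]
      set u : ℤ := Int.gcdA (b : ℤ) (d' : ℤ)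
      set v : ℤ := Int.gcdB (b : ℤ) (d' : ℤ)
      have hBez : (d : ℤ) = b * u + d' * v := by
        rw [← hgcdZ]; exact Int.gcd_eq_gcd_ab _ _
      obtain ⟨k, hk⟩ := hn
      set t : ℕ := ((k * u) % (d' : ℤ)).toNat with htdef
      have hd'Z : (0:ℤ) < (d' : ℤ) := by exact_mod_cast hd'pos
      have ht0 : (t : ℤ) = (k * u) % (d' : ℤ) :=
        Int.toNat_of_nonneg (Int.emod_nonneg _ (by omega))
      have htlt : (t : ℤ) < d' := by rw [ht0]; exact Int.emod_lt_of_pos _ hd'Z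
      have hdvd1 : (k * u : ℤ) - t = d' * ((k * u) / d') := by
        rw [ht0]; have := Int.mul_ediv_add_emod (k * u) (d' : ℤ); linarith
      have hnZ : (n : ℤ) = d * k := by exact_mod_cast hk
      have hdvd2 : ((d' : ℤ)) ∣ (n : ℤ) - t * b := by
        refine ⟨b * ((k * u) / d') + v * k, ?_⟩
        have : (n : ℤ) - t * b = b * ((k*u : ℤ) - t) + d' * (v * k) := by
          rw [hnZ, hBez]; ring
        rw [this, hdvd1]; ring
      have htlt' : t < d' := by exact_mod_cast htlt
      have htb_le : t * b + N' ≤ n := by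
        have : t * b ≤ d' * b := Nat.mul_le_mul_right _ (le_of_lt htlt')
        have h2 : d' * b = b * d' := Nat.mul_comm _ _
        omega
      set m : ℕ := n - t * b with hmdef
      have hmZ : (m : ℤ) = (n : ℤ) - t * b := by
        have : t * b ≤ n := by omega
        omega
      have hmd : d' ∣ m := by
        have : ((d':ℤ)) ∣ (m : ℤ) := by rw [hmZ]; exact hdvd2
        exact_mod_cast this
      have hmS : m ∈ S := hN' m hmd (by omega)
      have : t * b + m ∈ S := by
        refine AddSubmonoid.add_mem S ?_ hmS
        rw [← smul_eq_mul]
        exact AddSubmonoid.nsmul_mem S hbS t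
      have hne : n = t * b + m := by omega
      rwa [hne]

lemma gamma1_rep {A : Finset ℕ} {x : ℕ}
    (hx : x ∈ AddSubmonoid.closure ((A.erase 0 : Finset ℕ) : Set ℕ)) :
    ∃ k, k ≤ x ∧ x ∈ sumset A k := by
  induction hx using AddSubmonoid.closure_induction with
  | mem a ha =>
    simp only [Finset.coe_erase, Set.mem_diff, Finset.mem_coe, Set.mem_singleton_iff] at ha
    obtain ⟨haA, ha0⟩ := ha
    exact ⟨1, by omega, mem_sumset_one haA⟩
  | zero => exact ⟨0, le_refl _, by simp [sumset]⟩
  | add x y hx hy ihx ihy =>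
    obtain ⟨k1, hk1, hm1⟩ := ihx
    obtain ⟨k2, hk2, hm2⟩ := ihy
    exact ⟨k1 + k2, by omega, mem_sumset_add hm1 hm2⟩

lemma gamma2_rep {A : Finset ℕ} {an : ℕ} (hanA : an ∈ A)
    (hmax : ∀ a ∈ A, a ≤ an) {y : ℕ}
    (hy : y ∈ AddSubmonoid.closure ((A.image (fun a => an - a) : Finset ℕ) : Set ℕ)) :
    ∃ k, k ≤ y ∧ y ≤ k * an ∧ ∀ s, k ≤ s → s * an - y ∈ sumset A s := by
  induction hy using AddSubmonoid.closure_induction with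
  | mem g hg =>
    simp only [Finset.coe_image, Set.mem_image, Finset.mem_coe] at hg
    obtain ⟨a, haA, rfl⟩ := hg
    have hale : a ≤ an := hmax a haA
    by_cases h0 : an - a = 0
    · refine ⟨0, by omega, by omega, fun s _ => ?_⟩
      rw [h0, Nat.sub_zero]
      exact smul_mem_sumset hanA s
    · refine ⟨1, by omega, by omega, fun s hs => ?_⟩
      have key : s * an - (an - a) = a + (s - 1) * an := by
        have h1 : s * an = 1 * an + (s - 1) * an := by
          rw [← Nat.add_mul]; congr 1; omega
        have h2 : 1 * an = an := one_mul an
        omega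
      rw [key]
      have := mem_sumset_add (mem_sumset_one haA) (smul_mem_sumset hanA (s - 1))
      have hs' : 1 + (s - 1) = s := by omega
      rwa [hs'] at this
  | zero =>
    exact ⟨0, le_refl _, by omega, fun s _ => by
      rw [Nat.sub_zero]; exact smul_mem_sumset hanA s⟩
  | add y1 y2 hy1 hy2 ih1 ih2 =>
    obtain ⟨k1, hk1, hb1, hm1⟩ := ih1
    obtain ⟨k2, hk2, hb2, hm2⟩ := ih2
    refine ⟨k1 + k2, by omega, ?_, fun s hs => ?_⟩
    · have : (k1 + k2) * an = k1 * an + k2 * an := Nat.add_mul _ _ _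
      omega
    · have e1 : k1 + (s - k1) = s := by omega
      have h1 := hm1 k1 (le_refl _)
      have h2 := hm2 (s - k1) (by omega)
      have hsplit : s * an = k1 * an + (s - k1) * an := by
        rw [← Nat.add_mul, e1]
      have hb2' : y2 ≤ (s - k1) * an := by
        calc y2 ≤ k2 * an := hb2
        _ ≤ (s - k1) * an := Nat.mul_le_mul_right _ (by omega)
      have := mem_sumset_add h1 h2
      rw [e1] at this
      have key : s * an - (y1 + y2) = (k1 * an - y1) + ((s - k1) * an - y2) := by
        omega
      rwa [key]

lemma decomp (N1 an : ℕ) (han : 1 ≤ an) (S : Set ℕ) (hN1 : ∀ n, N1 ≤ n → n ∈ S) :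
    ∀ x, x ∈ S → ∃ j x', x = j * an + x' ∧ x' ∈ S ∧ x' < N1 + an := by
  intro x
  induction x using Nat.strong_induction_on with
  | _ x ih =>
    intro hx
    by_cases hsmall : x < N1 + an
    · exact ⟨0, x, by omega, hx, hsmall⟩
    · have h1 : N1 ≤ x - an := by omega
      have h2 : x - an ∈ S := hN1 _ h1
      obtain ⟨j', x', he, hx', hlt⟩ := ih (x - an) (by omega) h2
      exact ⟨j' + 1, x', by
        have : (j' + 1) * an = j' * an + an := Nat.succ_mul _ _
        omega, hx', hlt⟩

lemma forward {A : Finset ℕ} {an : ℕ} (_h0 : 0 ∈ A) (hmax : ∀ a ∈ A, a ≤ an) :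
    ∀ s x, x ∈ sumset A s → x ≤ s * an ∧
      x ∈ AddSubmonoid.closure ((A.erase 0 : Finset ℕ) : Set ℕ) ∧
      s * an - x ∈ AddSubmonoid.closure ((A.image (fun a => an - a) : Finset ℕ) : Set ℕ) := by
  intro s
  induction s with
  | zero =>
    intro x hx
    simp [sumset] at hx
    subst hx
    simp only [Nat.zero_mul, Nat.sub_zero]
    exact ⟨le_refl _, AddSubmonoid.zero_mem _, AddSubmonoid.zero_mem _⟩
  | succ s ih =>
    intro x hx
    simp only [sumset, Finset.mem_add] at hx
    obtain ⟨a, ha, b, hb, rfl⟩ := hx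
    obtain ⟨hble, hb1, hb2⟩ := ih b hb
    have hale : a ≤ an := hmax a ha
    have hsplit : (s + 1) * an = an + s * an := by ring
    refine ⟨by omega, ?_, ?_⟩
    · -- a + b ∈ Γ1
      refine AddSubmonoid.add_mem _ ?_ hb1
      by_cases ha0 : a = 0
      · subst ha0; exact AddSubmonoid.zero_mem _
      · exact AddSubmonoid.subset_closure (by
          simp only [Finset.coe_erase, Set.mem_diff, Finset.mem_coe,
            Set.mem_singleton_iff]
          exact ⟨ha, ha0⟩)
    · have key : (s + 1) * an - (a + b) = (an - a) + (s * an - b) := by omega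
      rw [key]
      refine AddSubmonoid.add_mem _ ?_ hb2
      exact AddSubmonoid.subset_closure (by
        simp only [Finset.coe_image, Set.mem_image, Finset.mem_coe]
        exact ⟨a, ha, rfl⟩)

theorem stmt7 (A : Finset ℕ) (h0 : 0 ∈ A) (hn : 2 ≤ A.card) (hgcd : A.gcd id = 1)
    (an : ℕ) (han : an = A.max' ⟨0, h0⟩)
    (Γ1 Γ2 : AddSubmonoid ℕ)
    (hΓ1 : Γ1 = AddSubmonoid.closure ((A.erase 0 : Finset ℕ) : Set ℕ))
    (hΓ2 : Γ2 = AddSubmonoid.closure ((A.image (fun a => an - a) : Finset ℕ) : Set ℕ))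
    (δ1 δ2 : ℕ)
    (hδ1 : δ1 = (Set.univ \ (Γ1 : Set ℕ)).ncard)
    (hδ2 : δ2 = (Set.univ \ (Γ2 : Set ℕ)).ncard) :
    ∃ s0 : ℕ, ∀ s ≥ s0, (sumset A s).card + δ1 + δ2 = s * an + 1 := by
  classical
  have hanA : an ∈ A := han ▸ A.max'_mem _
  have hmax : ∀ a ∈ A, a ≤ an := fun a ha => han ▸ A.le_max' a ha
  have han1 : 1 ≤ an := by
    by_contra h
    push_neg at h
    interval_cases an
    have : A.card ≤ 1 := Finset.card_le_one.2 (fun a ha b hb => by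
      have := hmax a ha; have := hmax b hb; omega)
    omega
  -- gcd of A.erase 0 is 1
  have hg1 : (A.erase 0).gcd id = 1 := by
    have h1 : A = insert 0 (A.erase 0) := (Finset.insert_erase h0).symm
    have h2 : A.gcd id = (A.erase 0).gcd id := by
      conv_lhs => rw [h1]
      rw [Finset.gcd_insert]
      simp
    rw [← h2, hgcd]
  -- gcd of the image is 1
  have hg2 : (A.image (fun a => an - a)).gcd id = 1 := by
    set d := (A.image (fun a => an - a)).gcd id with hddef
    have hdan : d ∣ an := by
      have : an ∈ A.image (fun a => an - a) :=
        Finset.mem_image.2 ⟨0, h0, by simp⟩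
      have := Finset.gcd_dvd (f := id) this
      simpa using this
    have hda : ∀ a ∈ A, d ∣ a := by
      intro a ha
      have h1 : d ∣ an - a := by
        have : an - a ∈ A.image (fun a => an - a) := Finset.mem_image.2 ⟨a, ha, rfl⟩
        have := Finset.gcd_dvd (f := id) this
        simpa using this
      have h2 : a = an - (an - a) := by
        have := hmax a ha; omega
      rw [h2]
      exact Nat.dvd_sub hdan h1
    have : d ∣ A.gcd id := Finset.dvd_gcd (fun a ha => hda a ha)
    rw [hgcd] at this
    exact Nat.dvd_one.mp this
  -- cofiniteness
  obtain ⟨N1, hN1'⟩ := gcd_dvd_cofinite Γ1 (A.erase 0)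
    (fun b hb => hΓ1 ▸ AddSubmonoid.subset_closure (Finset.mem_coe.2 hb))
    (by rw [hg1]; norm_num)
  obtain ⟨N2, hN2'⟩ := gcd_dvd_cofinite Γ2 (A.image (fun a => an - a))
    (fun b hb => hΓ2 ▸ AddSubmonoid.subset_closure (Finset.mem_coe.2 hb))
    (by rw [hg2]; norm_num)
  have hN1 : ∀ n, N1 ≤ n → n ∈ Γ1 := fun n hn => hN1' n (by rw [hg1]; exact one_dvd _) hn
  have hN2 : ∀ n, N2 ≤ n → n ∈ Γ2 := fun n hn => hN2' n (by rw [hg2]; exact one_dvd _) hn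
  set s0 : ℕ := N1 + N2 + (N1 + an + 1) * an + 1 with hs0def
  refine ⟨s0, fun s hs => ?_⟩
  have hsan : N1 + N2 ≤ s * an := by
    calc N1 + N2 ≤ s := by omega
    _ = s * 1 := (mul_one s).symm
    _ ≤ s * an := Nat.mul_le_mul_left _ han1
  -- key characterization
  have key : ∀ x, x ∈ sumset A s ↔ (x ≤ s * an ∧ x ∈ Γ1 ∧ s * an - x ∈ Γ2) := by
    intro x
    constructor
    · intro hx
      obtain ⟨h1, h2, h3⟩ := forward h0 hmax s x hx
      exact ⟨h1, hΓ1 ▸ h2, hΓ2 ▸ h3⟩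
    · rintro ⟨hxle, hx1, hx2⟩
      set y : ℕ := s * an - x with hydef
      by_cases hy : y < (N1 + an + 1) * an
      · obtain ⟨k, hk, hkan, hrep⟩ := gamma2_rep hanA hmax (hΓ2 ▸ hx2)
        have := hrep s (by omega)
        have hxy : s * an - y = x := by omega
        rwa [hxy] at this
      · push_neg at hy
        obtain ⟨j, x', he, hx', hlt⟩ := decomp N1 an han1 (Γ1 : Set ℕ) hN1 x hx1
        obtain ⟨k, hk, hmem⟩ := gamma1_rep (hΓ1 ▸ (hx' : x' ∈ (Γ1 : Set ℕ)))
        have hjan : j * an ≤ s * an := by omega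
        have hjs : j ≤ s := Nat.le_of_mul_le_mul_right hjan (by omega)
        have hsj : (s - j) * an = s * an - j * an := Nat.sub_mul _ _ _
        have hge : (N1 + an + 1) * an ≤ (s - j) * an := by omega
        have hsjge : N1 + an + 1 ≤ s - j := Nat.le_of_mul_le_mul_right hge (by omega)
        have hmem' : x' ∈ sumset A (s - j) := sumset_mono h0 (by omega) hmem
        have := mem_sumset_add (smul_mem_sumset hanA j) hmem'
        have hjeq : j + (s - j) = s := by omega
        rw [hjeq] at this
        rwa [he]
  -- counting
  set R := Finset.range (s * an + 1) with hRdef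
  have hset : sumset A s = R.filter (fun x => x ∈ Γ1 ∧ s * an - x ∈ Γ2) := by
    ext x
    rw [Finset.mem_filter, Finset.mem_range, key]
    constructor
    · rintro ⟨h1, h2, h3⟩; exact ⟨by omega, h2, h3⟩
    · rintro ⟨h1, h2, h3⟩; exact ⟨by omega, h2, h3⟩
  set F1 := R.filter (fun x => x ∉ Γ1) with hF1def
  set F2 := R.filter (fun x => x ∈ Γ1 ∧ s * an - x ∉ Γ2) with hF2def
  have hpart : (R.filter (fun x => x ∈ Γ1 ∧ s * an - x ∈ Γ2)).card
      + (R.filter (fun x => ¬(x ∈ Γ1 ∧ s * an - x ∈ Γ2))).card = R.card :=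
    Finset.card_filter_add_card_filter_not _
  have hneg : R.filter (fun x => ¬(x ∈ Γ1 ∧ s * an - x ∈ Γ2)) = F1 ∪ F2 := by
    ext x
    simp only [hF1def, hF2def, Finset.mem_filter, Finset.mem_union]
    tauto
  have hdisj : Disjoint F1 F2 := by
    rw [Finset.disjoint_left]
    intro x hx1 hx2
    simp only [hF1def, hF2def, Finset.mem_filter] at hx1 hx2
    exact hx1.2 hx2.2.1
  have hcardunion : (F1 ∪ F2).card = F1.card + F2.card :=
    Finset.card_union_of_disjoint hdisj
  -- F1.card = δ1
  have hF1card : F1.card = δ1 := by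
    have hcoe : (↑F1 : Set ℕ) = Set.univ \ (Γ1 : Set ℕ) := by
      ext z
      simp only [hF1def, hRdef, Finset.coe_filter, Finset.mem_coe, Finset.mem_range, Set.mem_setOf_eq,
        Set.mem_diff, Set.mem_univ, true_and, SetLike.mem_coe]
      constructor
      · rintro ⟨_, hz⟩; exact hz
      · intro hz
        have hzN : z < N1 := by
          by_contra h
          push_neg at h
          exact hz (hN1 z h)
        exact ⟨by omega, hz⟩
    rw [hδ1, ← hcoe, Set.ncard_coe_finset]
  -- F2.card = δ2
  have hF2card : F2.card = δ2 := by
    set G2 := R.filter (fun g => g ∉ Γ2) with hG2def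
    have hbij : F2.card = G2.card := by
      refine Finset.card_bij (fun x _ => s * an - x) ?_ ?_ ?_
      · intro x hx
        simp only [hF2def, hRdef, Finset.mem_filter, Finset.mem_range] at hx
        simp only [hG2def, hRdef, Finset.mem_filter, Finset.mem_range]
        exact ⟨by omega, hx.2.2⟩
      · intro x1 hx1 x2 hx2 heq
        simp only [hF2def, hRdef, Finset.mem_filter, Finset.mem_range] at hx1 hx2
        omega
      · intro g hg
        simp only [hG2def, hRdef, Finset.mem_filter, Finset.mem_range] at hg
        obtain ⟨hglt, hgn⟩ := hg
        have hgN2 : g < N2 := by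
          by_contra h
          push_neg at h
          exact hgn (hN2 g h)
        have hmem : s * an - g ∈ F2 := by
          simp only [hF2def, hRdef, Finset.mem_filter, Finset.mem_range]
          have he : s * an - (s * an - g) = g := by omega
          refine ⟨by omega, ?_, by rw [he]; exact hgn⟩
          exact hN1 _ (by omega)
        exact ⟨s * an - g, hmem, by omega⟩
    have hcoe : (↑G2 : Set ℕ) = Set.univ \ (Γ2 : Set ℕ) := by
      ext z
      simp only [hG2def, hRdef, Finset.coe_filter, Finset.mem_coe, Finset.mem_range, Set.mem_setOf_eq,
        Set.mem_diff, Set.mem_univ, true_and, SetLike.mem_coe]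
      constructor
      · rintro ⟨_, hz⟩; exact hz
      · intro hz
        have hzN : z < N2 := by
          by_contra h
          push_neg at h
          exact hz (hN2 z h)
        exact ⟨by omega, hz⟩
    rw [hbij, hδ2, ← hcoe, Set.ncard_coe_finset]
  have hRcard : R.card = s * an + 1 := Finset.card_range _
  rw [hneg, hcardunion, hF1card, hF2card, hRcard] at hpart
  rw [hset]
  omega
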